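/- For R = k[x,y,z] with M = (x,y,z) and I_1 = (x, y^2, yz, z^2), the ideal M·I_1 is integrally closed. -/

import Mathlib

/-- The set of elements of `R` integral over the ideal `I`: `x` satisfying
`x ^ n + a 1 * x ^ (n-1) + ⋯ + a n = 0` with `a j ∈ I ^ j`. -/
def Ideal.intCl {R : Type*} [CommRing R] (I : Ideal R) : Set R :=
  {x | ∃ n : ℕ, 0 < n ∧ ∃ a : ℕ → R,
    (∀ j ∈ Finset.Icc 1 n, a j ∈ I ^ j) ∧
    x ^ n + ∑ j ∈ Finset.Icc 1 n, a j * x ^ (n - j) = 0}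

/-- Minimal number of generators of an ideal. -/
noncomputable def Ideal.mu {R : Type*} [CommRing R] (I : Ideal R) : ℕ :=
  sInf {n : ℕ | ∃ s : Finset R, s.card = n ∧ Ideal.span (s : Set R) = I}

/-- The `M`-adic order of an ideal `I`. -/
noncomputable def Ideal.ord {R : Type*} [CommRing R] (M I : Ideal R) : ℕ :=
  sSup {n : ℕ | I ≤ M ^ n}
noncomputable section
open MvPolynomial

variable {k : Type*}

/-- The variables of `k[x,y,z]`. -/
def px [CommSemiring k] : MvPolynomial (Fin 3) k := X 0
def py [CommSemiring k] : MvPolynomial (Fin 3) k := X 1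
def pz [CommSemiring k] : MvPolynomial (Fin 3) k := X 2

/-! ### Auxiliary weight machinery -/

section Aux

variable {K : Type*} [Field K]

/-- The weight of an exponent vector with respect to weights `c` on the variables. -/
def Wt (c : Fin 3 → ℕ) (d : Fin 3 →₀ ℕ) : ℕ := c 0 * d 0 + c 1 * d 1 + c 2 * d 2

lemma Wt_add (c : Fin 3 → ℕ) (d e : Fin 3 →₀ ℕ) : Wt c (d + e) = Wt c d + Wt c e := by
  simp [Wt, Finsupp.add_apply, mul_add]; ring

lemma Wt_smul (c : Fin 3 → ℕ) (n : ℕ) (d : Fin 3 →₀ ℕ) : Wt c (n • d) = n * Wt c d := by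
  simp [Wt, Finsupp.smul_apply, mul_add]; ring

/-- A tie-breaking refinement of the weight, injective when `c 2 ≠ 0`. -/
def Lw (c : Fin 3 → ℕ) (d : Fin 3 →₀ ℕ) : ℕ ×ₗ (ℕ ×ₗ ℕ) := toLex (Wt c d, toLex (d 0, d 1))

lemma Lw_add (c : Fin 3 → ℕ) (d e : Fin 3 →₀ ℕ) : Lw c (d + e) = Lw c d + Lw c e := by
  simp only [Lw, Wt_add]
  rfl

lemma Lw_inj (c : Fin 3 → ℕ) (hc : c 2 ≠ 0) : Function.Injective (Lw c) := by
  intro d e h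
  have h' : (Wt c d, ((d 0 : ℕ), (d 1 : ℕ))) = (Wt c e, ((e 0 : ℕ), (e 1 : ℕ))) := by
    have := congrArg (fun x => ofLex x) h
    simpa [Lw, Prod.ext_iff] using congrArg (fun x => (x.1, ((ofLex x.2).1, (ofLex x.2).2))) this
  obtain ⟨h1, h2, h3⟩ : Wt c d = Wt c e ∧ d 0 = e 0 ∧ d 1 = e 1 := by
    simpa [Prod.ext_iff] using h'
  have h4 : d 2 = e 2 := by
    simp only [Wt, h2, h3] at h1
    have h5 : c 2 * d 2 = c 2 * e 2 := by omega
    exact Nat.eq_of_mul_eq_mul_left (Nat.pos_of_ne_zero hc) h5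
  ext i
  fin_cases i <;> assumption

lemma Lw_le_Wt {c : Fin 3 → ℕ} {d e : Fin 3 →₀ ℕ} (h : Lw c d ≤ Lw c e) : Wt c d ≤ Wt c e := by
  rcases (Prod.Lex.le_iff).1 h with h | h
  · exact h.le
  · exact h.1.le

lemma cancel_pair {α : Type*} [AddCommMonoid α] [LinearOrder α] [IsOrderedCancelAddMonoid α] {x x' y y' : α}
    (hx : x ≤ x') (hy : y ≤ y') (h : x' + y' = x + y) : x = x' ∧ y = y' := by
  constructor
  · refine le_antisymm hx ?_
    have : x' + y' ≤ x + y' := h.le.trans (add_le_add_right hy x)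
    exact le_of_add_le_add_right this
  · refine le_antisymm hy ?_
    have : x' + y' ≤ x' + y := h.le.trans (add_le_add_left hx y)
    exact le_of_add_le_add_left this

/-- The ideal of polynomials all of whose monomials have `c`-weight at least `t`. -/
def Pid (K : Type*) [Field K] (c : Fin 3 → ℕ) (t : ℕ) : Ideal (MvPolynomial (Fin 3) K) where
  carrier := {f | ∀ d ∈ f.support, t ≤ Wt c d}
  zero_mem' := by simp
  add_mem' := by
    intro f g hf hg d hd
    rcases Finset.mem_union.1 (MvPolynomial.support_add hd) with h | h
    · exact hf d h
    · exact hg d h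
  smul_mem' := by
    intro r f hf d hd
    rw [smul_eq_mul] at hd
    rcases Finset.mem_add.1 (MvPolynomial.support_mul r f hd) with ⟨a, ha, b, hb, rfl⟩
    have := hf b hb
    rw [Wt_add]; omega

lemma mem_Pid {c : Fin 3 → ℕ} {t : ℕ} {f : MvPolynomial (Fin 3) K} :
    f ∈ Pid K c t ↔ ∀ d ∈ f.support, t ≤ Wt c d := Iff.rfl

lemma mul_mem_Pid {c : Fin 3 → ℕ} {s t : ℕ} {f g : MvPolynomial (Fin 3) K}
    (hf : f ∈ Pid K c s) (hg : g ∈ Pid K c t) : f * g ∈ Pid K c (s + t) := by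
  intro d hd
  rcases Finset.mem_add.1 (MvPolynomial.support_mul f g hd) with ⟨a, ha, b, hb, rfl⟩
  have := hf a ha; have := hg b hb
  rw [Wt_add]; omega

lemma pow_mem_Pid {c : Fin 3 → ℕ} {s : ℕ} {f : MvPolynomial (Fin 3) K}
    (hf : f ∈ Pid K c s) (m : ℕ) : f ^ m ∈ Pid K c (m * s) := by
  induction m with
  | zero => intro d hd; simp
  | succ m ih =>
      rw [pow_succ, Nat.succ_mul]
      exact mul_mem_Pid ih hf

lemma Pid_mul_le {c : Fin 3 → ℕ} {s t : ℕ} : Pid K c s * Pid K c t ≤ Pid K c (s + t) :=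
  Ideal.mul_le.2 fun _ hf _ hg => mul_mem_Pid hf hg

lemma Pid_pow_le {c : Fin 3 → ℕ} {t : ℕ} (j : ℕ) (hj : 1 ≤ j) :
    (Pid K c t) ^ j ≤ Pid K c (j * t) := by
  obtain ⟨j, rfl⟩ : ∃ j', j = j' + 1 := ⟨j - 1, by omega⟩
  clear hj
  induction j with
  | zero => simpa using le_refl _
  | succ j ih =>
      rw [pow_succ]
      refine le_trans (Ideal.mul_mono ih le_rfl) (le_trans Pid_mul_le ?_)
      rw [show (j + 1 + 1) * t = (j + 1) * t + t by ring]

/-- Key: the product of `Lw`-minimal monomials of two polynomials survives in the product. -/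
lemma min_support_mul {c : Fin 3 → ℕ} (hc : c 2 ≠ 0) {f g : MvPolynomial (Fin 3) K}
    {u v : Fin 3 →₀ ℕ} (hu : u ∈ f.support) (hv : v ∈ g.support)
    (humin : ∀ d ∈ f.support, Lw c u ≤ Lw c d) (hvmin : ∀ d ∈ g.support, Lw c v ≤ Lw c d) :
    u + v ∈ (f * g).support ∧ ∀ d ∈ (f * g).support, Lw c (u + v) ≤ Lw c d := by
  constructor
  · rw [MvPolynomial.mem_support_iff, MvPolynomial.coeff_mul]
    rw [Finset.sum_eq_single_of_mem (u, v) (Finset.HasAntidiagonal.mem_antidiagonal.2 rfl)]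
    · exact mul_ne_zero (MvPolynomial.mem_support_iff.1 hu) (MvPolynomial.mem_support_iff.1 hv)
    · rintro ⟨a, b⟩ hab hne
      by_contra hz
      have ha : a ∈ f.support := by
        rw [MvPolynomial.mem_support_iff]; intro h; apply hz; rw [h, zero_mul]
      have hb : b ∈ g.support := by
        rw [MvPolynomial.mem_support_iff]; intro h; apply hz; rw [h, mul_zero]
      have hsum : Lw c a + Lw c b = Lw c u + Lw c v := by
        rw [← Lw_add, ← Lw_add, Finset.HasAntidiagonal.mem_antidiagonal.1 hab]
      obtain ⟨h1, h2⟩ := cancel_pair (humin a ha) (hvmin b hb) hsum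
      exact hne (Prod.ext ((Lw_inj c hc) h1.symm) ((Lw_inj c hc) h2.symm))
  · intro d hd
    rcases Finset.mem_add.1 (MvPolynomial.support_mul f g hd) with ⟨a, ha, b, hb, rfl⟩
    rw [Lw_add, Lw_add]
    exact add_le_add (humin a ha) (hvmin b hb)

lemma min_support_pow {c : Fin 3 → ℕ} (hc : c 2 ≠ 0) {f : MvPolynomial (Fin 3) K}
    {u : Fin 3 →₀ ℕ} (hu : u ∈ f.support)
    (humin : ∀ d ∈ f.support, Lw c u ≤ Lw c d) (n : ℕ) :
    n • u ∈ (f ^ n).support ∧ ∀ d ∈ (f ^ n).support, Lw c (n • u) ≤ Lw c d := by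
  induction n with
  | zero =>
      have h1 : ((1 : MvPolynomial (Fin 3) K)).support = {0} := by
        classical
        rw [show (1 : MvPolynomial (Fin 3) K) = MvPolynomial.monomial 0 1 by
          simp [MvPolynomial.monomial_zero']]
        rw [MvPolynomial.support_monomial]
        simp
      constructor
      · rw [pow_zero, h1, zero_smul]; simp
      · intro d hd
        rw [pow_zero, h1] at hd
        simp only [Finset.mem_singleton] at hd
        rw [zero_smul, hd]
  | succ n ih =>
      rw [pow_succ, succ_nsmul]
      exact min_support_mul hc ih.1 hu ih.2 humin

/-- Any element integral over an ideal contained in `Pid K c t` lies in `Pid K c t`. -/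
lemma intCl_le_Pid {c : Fin 3 → ℕ} (hc : c 2 ≠ 0) {J : Ideal (MvPolynomial (Fin 3) K)} {t : ℕ}
    (hJ : J ≤ Pid K c t) : J.intCl ⊆ (Pid K c t : Set (MvPolynomial (Fin 3) K)) := by
  rintro f ⟨n, hn, a, ha, heq⟩
  by_cases hf0 : f = 0
  · subst hf0; exact (Pid K c t).zero_mem
  have hsupp : f.support.Nonempty := by
    rwa [Finset.nonempty_iff_ne_empty, Ne, MvPolynomial.support_eq_empty]
  obtain ⟨u, hu, humin⟩ := Finset.exists_min_image f.support (Lw c) hsupp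
  have hfP : f ∈ Pid K c (Wt c u) := fun d hd => Lw_le_Wt (humin d hd)
  suffices hWu : t ≤ Wt c u by
    intro d hd
    exact le_trans hWu (Lw_le_Wt (humin d hd))
  by_contra hlt
  push_neg at hlt
  obtain ⟨hmem, -⟩ := min_support_pow hc hu humin n
  have hcoeffS : MvPolynomial.coeff (n • u) (∑ j ∈ Finset.Icc 1 n, a j * f ^ (n - j)) = 0 := by
    rw [MvPolynomial.coeff_sum]
    refine Finset.sum_eq_zero fun j hj => ?_
    rw [Finset.mem_Icc] at hj
    by_contra hz
    have hd : n • u ∈ (a j * f ^ (n - j)).support := MvPolynomial.mem_support_iff.2 hz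
    rcases Finset.mem_add.1 (MvPolynomial.support_mul _ _ hd) with ⟨d1, hd1, d2, hd2, hde⟩
    have h1 : j * t ≤ Wt c d1 := by
      have haj : a j ∈ Pid K c (j * t) :=
        Pid_pow_le j hj.1 (Ideal.pow_right_mono hJ j (ha j (Finset.mem_Icc.2 hj)))
      exact haj d1 hd1
    have h2 : (n - j) * Wt c u ≤ Wt c d2 := pow_mem_Pid hfP (n - j) d2 hd2
    have hWe : Wt c (n • u) = Wt c d1 + Wt c d2 := by rw [← hde, ← Wt_add]
    rw [Wt_smul] at hWe
    have e1 : j * Wt c u + (n - j) * Wt c u = n * Wt c u := by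
      rw [← add_mul]; congr 1; omega
    have e2 : j * Wt c u < j * t := by
      exact Nat.mul_lt_mul_of_le_of_lt (le_refl j) hlt (by omega)
    omega
  have hne : MvPolynomial.coeff (n • u) (f ^ n + ∑ j ∈ Finset.Icc 1 n, a j * f ^ (n - j)) ≠ 0 := by
    rw [MvPolynomial.coeff_add, hcoeffS, add_zero]
    exact MvPolynomial.mem_support_iff.1 hmem
  rw [heq] at hne
  simp at hne

/-! ### Specific monomial computations -/

lemma monomial_eq_prod (d : Fin 3 →₀ ℕ) :
    (monomial d (1 : K)) = X 0 ^ d 0 * X 1 ^ d 1 * X 2 ^ d 2 := by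
  rw [MvPolynomial.monomial_eq, map_one, one_mul]
  rw [Finsupp.prod_fintype _ _ (fun i => pow_zero (X i))]
  exact Fin.prod_univ_three _

lemma posdeg_mem_M {a b c : ℕ} (h : 1 ≤ a + b + c) :
    (X 0 : MvPolynomial (Fin 3) K) ^ a * X 1 ^ b * X 2 ^ c ∈
      Ideal.span {px, py, pz} := by
  have hx : (px : MvPolynomial (Fin 3) K) ∈ Ideal.span {px, py, pz} :=
    Ideal.subset_span (by simp)
  have hy : (py : MvPolynomial (Fin 3) K) ∈ Ideal.span {px, py, pz} :=
    Ideal.subset_span (by simp)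
  have hz : (pz : MvPolynomial (Fin 3) K) ∈ Ideal.span {px, py, pz} :=
    Ideal.subset_span (by simp)
  rcases Nat.lt_or_ge 0 a with ha | ha
  · obtain ⟨a', rfl⟩ : ∃ a', a = a' + 1 := ⟨a - 1, by omega⟩
    have : (X 0 : MvPolynomial (Fin 3) K) ^ (a' + 1) * X 1 ^ b * X 2 ^ c
        = (X 0 ^ a' * X 1 ^ b * X 2 ^ c) * px := by rw [px]; ring
    rw [this]
    exact Ideal.mul_mem_left _ _ hx
  rcases Nat.lt_or_ge 0 b with hb | hb
  · obtain ⟨b', rfl⟩ : ∃ b', b = b' + 1 := ⟨b - 1, by omega⟩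
    have : (X 0 : MvPolynomial (Fin 3) K) ^ a * X 1 ^ (b' + 1) * X 2 ^ c
        = (X 0 ^ a * X 1 ^ b' * X 2 ^ c) * py := by rw [py]; ring
    rw [this]
    exact Ideal.mul_mem_left _ _ hy
  have hc : 1 ≤ c := by omega
  obtain ⟨c', rfl⟩ : ∃ c', c = c' + 1 := ⟨c - 1, by omega⟩
  have : (X 0 : MvPolynomial (Fin 3) K) ^ a * X 1 ^ b * X 2 ^ (c' + 1)
      = (X 0 ^ a * X 1 ^ b * X 2 ^ c') * pz := by rw [pz]; ring
  rw [this]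
  exact Ideal.mul_mem_left _ _ hz

lemma monomial_mem_MI' {a b c : ℕ} (h1 : 2 ≤ a + b + c)
    (h2 : 3 ≤ 2 * a + b + c) :
    (X 0 : MvPolynomial (Fin 3) K) ^ a * X 1 ^ b * X 2 ^ c ∈
      (Ideal.span {px, py, pz} * Ideal.span {px, py ^ 2, py * pz, pz ^ 2} :
        Ideal (MvPolynomial (Fin 3) K)) := by
  have hxI : (px : MvPolynomial (Fin 3) K) ∈ Ideal.span {px, py ^ 2, py * pz, pz ^ 2} :=
    Ideal.subset_span (by simp)
  have hy2I : (py ^ 2 : MvPolynomial (Fin 3) K) ∈ Ideal.span {px, py ^ 2, py * pz, pz ^ 2} :=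
    Ideal.subset_span (by simp)
  have hyzI : (py * pz : MvPolynomial (Fin 3) K) ∈ Ideal.span {px, py ^ 2, py * pz, pz ^ 2} :=
    Ideal.subset_span (by simp)
  have hz2I : (pz ^ 2 : MvPolynomial (Fin 3) K) ∈ Ideal.span {px, py ^ 2, py * pz, pz ^ 2} :=
    Ideal.subset_span (by simp)
  rcases Nat.lt_or_ge 0 a with ha | ha
  · obtain ⟨a', rfl⟩ : ∃ a', a = a' + 1 := ⟨a - 1, by omega⟩
    have : (X 0 : MvPolynomial (Fin 3) K) ^ (a' + 1) * X 1 ^ b * X 2 ^ c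
        = (X 0 ^ a' * X 1 ^ b * X 2 ^ c) * px := by rw [px]; ring
    rw [this]
    exact Ideal.mul_mem_mul (posdeg_mem_M (by omega)) hxI
  have ha0 : a = 0 := by omega
  have hbc : 3 ≤ b + c := by omega
  rcases Nat.lt_or_ge 1 b with hb | hb
  · obtain ⟨b', rfl⟩ : ∃ b', b = b' + 2 := ⟨b - 2, by omega⟩
    have : (X 0 : MvPolynomial (Fin 3) K) ^ a * X 1 ^ (b' + 2) * X 2 ^ c
        = (X 0 ^ a * X 1 ^ b' * X 2 ^ c) * py ^ 2 := by rw [py]; ring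
    rw [this]
    exact Ideal.mul_mem_mul (posdeg_mem_M (by omega)) hy2I
  rcases Nat.lt_or_ge 0 b with hb1 | hb0
  · -- b = 1, c ≥ 2
    have hbeq : b = 1 := by omega
    subst hbeq
    obtain ⟨c', rfl⟩ : ∃ c', c = c' + 1 := ⟨c - 1, by omega⟩
    have : (X 0 : MvPolynomial (Fin 3) K) ^ a * X 1 ^ 1 * X 2 ^ (c' + 1)
        = (X 0 ^ a * X 1 ^ 0 * X 2 ^ c') * (py * pz) := by
      rw [py, pz]; ring
    rw [this]
    exact Ideal.mul_mem_mul (posdeg_mem_M (by omega)) hyzI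
  · -- b = 0, c ≥ 3
    have hb0' : b = 0 := by omega
    obtain ⟨c', rfl⟩ : ∃ c', c = c' + 2 := ⟨c - 2, by omega⟩
    have : (X 0 : MvPolynomial (Fin 3) K) ^ a * X 1 ^ b * X 2 ^ (c' + 2)
        = (X 0 ^ a * X 1 ^ b * X 2 ^ c') * pz ^ 2 := by rw [pz]; ring
    rw [this]
    exact Ideal.mul_mem_mul (posdeg_mem_M (by omega)) hz2I

lemma monomial_mem_MI {d : Fin 3 →₀ ℕ} (h1 : 2 ≤ d 0 + d 1 + d 2)
    (h2 : 3 ≤ 2 * d 0 + d 1 + d 2) :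
    (monomial d (1 : K)) ∈
      (Ideal.span {px, py, pz} * Ideal.span {px, py ^ 2, py * pz, pz ^ 2} :
        Ideal (MvPolynomial (Fin 3) K)) := by
  rw [monomial_eq_prod]
  exact monomial_mem_MI' h1 h2

end Aux

/-- `M I₁` is integrally closed for `I₁ = (x, y², yz, z²)`. -/
theorem MI1_integrally_closed (k : Type*) [Field k] [IsAlgClosed k] :
    let M : Ideal (MvPolynomial (Fin 3) k) := Ideal.span {px, py, pz}
    let I₁ : Ideal (MvPolynomial (Fin 3) k) := Ideal.span {px, py ^ 2, py * pz, pz ^ 2}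
    ((M * I₁ : Ideal (MvPolynomial (Fin 3) k)) : Set (MvPolynomial (Fin 3) k)) =
      (M * I₁).intCl := by
  intro M I₁
  set J : Ideal (MvPolynomial (Fin 3) k) := M * I₁ with hJdef
  -- weights
  set c₁ : Fin 3 → ℕ := ![1, 1, 1] with hc1def
  set c₂ : Fin 3 → ℕ := ![2, 1, 1] with hc2def
  have hc1 : c₁ 2 ≠ 0 := by simp [hc1def]
  have hc2 : c₂ 2 ≠ 0 := by simp [hc2def]
  -- J is contained in the two weight ideals
  have hM1 : M ≤ Pid k c₁ 1 := by
    rw [Ideal.span_le]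
    rintro f (rfl | rfl | rfl) <;>
      · intro d hd
        simp only [px, py, pz, MvPolynomial.support_X, Finset.mem_singleton] at hd
        subst hd
        simp [Wt, hc1def, Finsupp.single_apply]
  have hM2 : M ≤ Pid k c₂ 1 := by
    rw [Ideal.span_le]
    rintro f (rfl | rfl | rfl) <;>
      · intro d hd
        simp only [px, py, pz, MvPolynomial.support_X, Finset.mem_singleton] at hd
        subst hd
        simp [Wt, hc2def, Finsupp.single_apply]
  have hgen : ∀ (i : Fin 3) (e : ℕ), e ≠ 0 →
      ((X i : MvPolynomial (Fin 3) k) ^ e).support = {Finsupp.single i e} := by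
    intro i e he
    rw [MvPolynomial.X_pow_eq_monomial]
    classical
    rw [MvPolynomial.support_monomial]
    simp
  have hyz : ((py * pz : MvPolynomial (Fin 3) k)).support
      = {Finsupp.single 1 1 + Finsupp.single 2 1} := by
    rw [py, pz, show (X 1 * X 2 : MvPolynomial (Fin 3) k)
      = monomial (Finsupp.single 1 1 + Finsupp.single 2 1) 1 by
        rw [show (X 1 : MvPolynomial (Fin 3) k) = X 1 ^ 1 by rw [pow_one],
          show (X 2 : MvPolynomial (Fin 3) k) = X 2 ^ 1 by rw [pow_one],
          MvPolynomial.X_pow_eq_monomial, MvPolynomial.X_pow_eq_monomial,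
          MvPolynomial.monomial_mul, one_mul]]
    classical
    rw [MvPolynomial.support_monomial]
    simp
  have hI1 : I₁ ≤ Pid k c₁ 1 := by
    rw [Ideal.span_le]
    rintro f (rfl | rfl | rfl | rfl) <;> intro d hd
    · simp only [px, MvPolynomial.support_X, Finset.mem_singleton] at hd
      subst hd
      simp [Wt, hc1def, Finsupp.single_apply]
    · simp only [py] at hd
      rw [hgen 1 2 (by norm_num)] at hd
      simp only [Finset.mem_singleton] at hd; subst hd
      simp [Wt, hc1def, Finsupp.single_apply]
    · rw [hyz] at hd
      simp only [Finset.mem_singleton] at hd; subst hd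
      simp [Wt, hc1def, Finsupp.single_apply, Finsupp.add_apply]
    · simp only [pz] at hd
      rw [hgen 2 2 (by norm_num)] at hd
      simp only [Finset.mem_singleton] at hd; subst hd
      simp [Wt, hc1def, Finsupp.single_apply]
  have hI2 : I₁ ≤ Pid k c₂ 2 := by
    rw [Ideal.span_le]
    rintro f (rfl | rfl | rfl | rfl) <;> intro d hd
    · simp only [px, MvPolynomial.support_X, Finset.mem_singleton] at hd
      subst hd
      simp [Wt, hc2def, Finsupp.single_apply]
    · simp only [py] at hd
      rw [hgen 1 2 (by norm_num)] at hd
      simp only [Finset.mem_singleton] at hd; subst hd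
      simp [Wt, hc2def, Finsupp.single_apply]
    · rw [hyz] at hd
      simp only [Finset.mem_singleton] at hd; subst hd
      simp [Wt, hc2def, Finsupp.single_apply, Finsupp.add_apply]
    · simp only [pz] at hd
      rw [hgen 2 2 (by norm_num)] at hd
      simp only [Finset.mem_singleton] at hd; subst hd
      simp [Wt, hc2def, Finsupp.single_apply]
  have hJ1 : J ≤ Pid k c₁ 2 := by
    rw [hJdef]
    refine le_trans (Ideal.mul_mono hM1 hI1) (le_trans Pid_mul_le ?_)
    norm_num
  have hJ2 : J ≤ Pid k c₂ 3 := by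
    rw [hJdef]
    refine le_trans (Ideal.mul_mono hM2 hI2) (le_trans Pid_mul_le ?_)
    norm_num
  apply Set.Subset.antisymm
  · -- J ⊆ intCl J
    intro f hf
    refine ⟨1, one_pos, fun _ => -f, ?_, ?_⟩
    · intro j hj
      rw [Finset.mem_Icc] at hj
      have hj1 : j = 1 := by omega
      subst hj1
      rw [pow_one]
      exact neg_mem hf
    · simp
  · -- intCl J ⊆ J
    intro f hf
    have hf1 : f ∈ Pid k c₁ 2 := intCl_le_Pid hc1 hJ1 hf
    have hf2 : f ∈ Pid k c₂ 3 := intCl_le_Pid hc2 hJ2 hf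
    -- decompose into monomials
    rw [show f = ∑ d ∈ f.support, monomial d (MvPolynomial.coeff d f) from (f.as_sum)]
    refine Ideal.sum_mem _ fun d hd => ?_
    have hw1 : 2 ≤ Wt c₁ d := hf1 d hd
    have hw2 : 3 ≤ Wt c₂ d := hf2 d hd
    have hm : (monomial d (1 : k)) ∈ J := by
      rw [hJdef]
      refine monomial_mem_MI ?_ ?_
      · simpa [Wt, hc1def] using hw1
      · simpa [Wt, hc2def] using hw2
    have : (monomial d (MvPolynomial.coeff d f)) = MvPolynomial.C (MvPolynomial.coeff d f)
        * monomial d (1 : k) := by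
      rw [MvPolynomial.C_mul_monomial, mul_one]
    rw [this]
    exact Ideal.mul_mem_left _ _ hm
end
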